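/- arXiv:2402.13998 — 3 statements merged into one kernel-verified Lean document; each statement's English description precedes it below -/
import Mathlib

section
/- Let G be a finite group such that every irreducible complex character of G has degree at most 2. Then AD(G) belongs to the set {2 - 1/n : n a positive natural number}. -/
noncomputable section

/-- The set of irreducible complex characters of a group `G`: the characters of
simple (irreducible) finite-dimensional complex representations of `G`. -/
def Irr (G : Type) [Group G] : Set (G → ℂ) :=
  {χ | ∃ V : FDRep ℂ G, CategoryTheory.Simple V ∧ χ = FDRep.character V}

/-- The degree of a character: its value at the identity (a real number, since the value
at the identity is the dimension of the underlying representation). -/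
def deg {G : Type} [Group G] (χ : G → ℂ) : ℝ := (χ 1).re

/-- The Fourier antidiagonal constant `AD(G) = |G|⁻¹ ∑_{φ ∈ Irr(G)} d(φ)³`. -/
def AD (G : Type) [Group G] : ℝ :=
  (1 / Nat.card G) * ∑ᶠ χ ∈ Irr G, deg χ ^ 3


namespace ADProof
open CategoryTheory FDRep Module
open scoped Classical

variable {G : Type} [Group G] [Fintype G]

/-- inner product of class functions (no conjugation; uses `g⁻¹`). -/
def inn (f h : G → ℂ) : ℂ := (Fintype.card G : ℂ)⁻¹ * ∑ g, f g * h g⁻¹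

lemma card_ne_zero : ((Fintype.card G : ℂ)) ≠ 0 := by
  exact_mod_cast Fintype.card_ne_zero

lemma char_orth (V W : FDRep ℂ G) [sv : Simple V] [sw : Simple W] :
    inn (FDRep.character V) (FDRep.character W) = if Nonempty (V ≅ W) then 1 else 0 := by
  have h := FDRep.char_orthonormal V W
  rw [Nat.card_eq_fintype_card] at h
  exact h

lemma inn_self {χ : G → ℂ} (hχ : χ ∈ Irr G) : inn χ χ = 1 := by
  obtain ⟨V, hV, rfl⟩ := hχ
  have := char_orth V V
  rwa [if_pos ⟨Iso.refl V⟩] at this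

lemma inn_ne {χ ψ : G → ℂ} (hχ : χ ∈ Irr G) (hψ : ψ ∈ Irr G) (hne : χ ≠ ψ) :
    inn χ ψ = 0 := by
  obtain ⟨V, hV, rfl⟩ := hχ
  obtain ⟨W, hW, rfl⟩ := hψ
  have := char_orth V W
  rwa [if_neg (fun ⟨i⟩ => hne (FDRep.char_iso i))] at this

lemma inn_ite {χ ψ : G → ℂ} (hχ : χ ∈ Irr G) (hψ : ψ ∈ Irr G) :
    inn χ ψ = if χ = ψ then 1 else 0 := by
  split_ifs with h
  · subst h; exact inn_self hχ
  · exact inn_ne hχ hψ h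

/-- `inn · ψ` as a linear map. -/
def innL (ψ : G → ℂ) : (G → ℂ) →ₗ[ℂ] ℂ where
  toFun f := inn f ψ
  map_add' f g := by
    simp only [inn, ← mul_add, ← Finset.sum_add_distrib, Pi.add_apply, add_mul]
  map_smul' c f := by
    simp only [inn, Pi.smul_apply, smul_eq_mul, RingHom.id_apply, Finset.mul_sum]
    exact Finset.sum_congr rfl fun g _ => by ring

lemma irr_finite : (Irr G).Finite := by
  have li : LinearIndependent ℂ ((↑) : (Irr G) → (G → ℂ)) := by
    rw [linearIndependent_iff']
    intro s g hsum j hj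
    have := congrArg (innL (j : G → ℂ)) hsum
    rw [map_sum, map_zero] at this
    rw [Finset.sum_eq_single j] at this
    · rw [map_smul, smul_eq_mul, innL] at this
      simp only [LinearMap.coe_mk, AddHom.coe_mk] at this
      rw [inn_self j.2] at this
      simpa using this
    · intro i _ hij
      rw [map_smul, smul_eq_mul, innL]
      simp only [LinearMap.coe_mk, AddHom.coe_mk]
      rw [inn_ne i.2 j.2 (fun hh => hij (Subtype.ext hh)), mul_zero]
    · intro hjs; exact absurd hj hjs
  exact li.finite


lemma simple_nontrivial (V : FDRep ℂ G) [Simple V] : Nontrivial V := by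
  by_contra hs
  rw [not_nontrivial_iff_subsingleton] at hs
  refine CategoryTheory.id_nonzero V ?_
  apply Action.hom_ext
  apply FGModuleCat.hom_ext
  apply LinearMap.ext
  intro v
  exact @Subsingleton.elim _ hs _ _

/-- A subrepresentation on an invariant subspace. -/
def subrep {V : Type} [AddCommGroup V] [Module ℂ V] (ρ : Representation ℂ G V)
    (W : Submodule ℂ V) (hW : ∀ g : G, ∀ x ∈ W, ρ g x ∈ W) : Representation ℂ G W where
  toFun g := (ρ g).restrict (fun x hx => hW g x hx)
  map_one' := by ext x; simp [LinearMap.restrict_apply]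
  map_mul' g h := by ext x; simp [LinearMap.restrict_apply]

lemma subrep_apply {V : Type} [AddCommGroup V] [Module ℂ V] (ρ : Representation ℂ G V)
    (W : Submodule ℂ V) (hW) (g : G) (x : W) :
    (subrep ρ W hW g x : V) = ρ g (x : V) := rfl

lemma simple_of_no_invariant (V : Type) [AddCommGroup V] [Module ℂ V] [FiniteDimensional ℂ V]
    [Nontrivial V] (ρ : Representation ℂ G V)
    (hs : ∀ W : Submodule ℂ V, (∀ g : G, ∀ x ∈ W, ρ g x ∈ W) → W = ⊥ ∨ W = ⊤) :
    Simple (FDRep.of ρ) := by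
  constructor
  intro Y f hf
  constructor
  · intro hiso h0
    obtain ⟨w, hw1, hw2⟩ := hiso.out
    rw [h0, Limits.comp_zero] at hw2
    have h1 : (0 : FDRep.of ρ ⟶ FDRep.of ρ) = 𝟙 (FDRep.of ρ) := hw2
    obtain ⟨x, y, hxy⟩ := exists_pair_ne V
    have h2 := congrArg Action.Hom.hom h1
    have hx : x = 0 := by
      have := congrFun (congrArg DFunLike.coe (congrArg (fun φ => φ.hom.hom) h2)) x
      simpa [Action.zero_hom] using this.symm
    have hy : y = 0 := by
      have := congrFun (congrArg DFunLike.coe (congrArg (fun φ => φ.hom.hom) h2)) y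
      simpa [Action.zero_hom] using this.symm
    exact hxy (hx.trans hy.symm)
  · intro hne
    -- f.hom as a linear map
    set F : Y.V →ₗ[ℂ] V := f.hom.hom.hom with hF
    have hcomm : ∀ (g : G) (y : Y.V), F (Y.ρ g y) = ρ g (F y) := by
      intro g y
      have := f.comm g
      have := congrFun (congrArg DFunLike.coe (congrArg (fun φ => φ.hom.hom) this)) y
      exact this
    -- the range of F is invariant, hence ⊤
    have hrinv : ∀ g : G, ∀ x ∈ LinearMap.range F, ρ g x ∈ LinearMap.range F := by
      rintro g x ⟨y, rfl⟩
      exact ⟨Y.ρ g y, hcomm g y⟩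
    have hrange : LinearMap.range F = ⊤ := by
      rcases hs (LinearMap.range F) hrinv with hbot | htop
      · exfalso
        apply hne
        apply Action.hom_ext
        apply FGModuleCat.hom_ext
        apply LinearMap.ext
        intro y
        have : F y ∈ LinearMap.range F := ⟨y, rfl⟩
        rw [hbot] at this
        simpa using this
      · exact htop
    -- the kernel of F is trivial
    have hker : LinearMap.ker F = ⊥ := by
      by_contra hK
      obtain ⟨x, hxK, hx0⟩ := Submodule.exists_mem_ne_zero_of_ne_bot hK
      have hinv : ∀ g : G, ∀ z ∈ LinearMap.ker F, Y.ρ g z ∈ LinearMap.ker F := by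
        intro g z hz
        rw [LinearMap.mem_ker] at hz ⊢
        exact (hcomm g z).trans (by rw [hz, map_zero])
      let Z : FDRep ℂ G := FDRep.of (subrep Y.ρ (LinearMap.ker F) hinv)
      let ι : Z ⟶ Y := ⟨FGModuleCat.ofHom (LinearMap.ker F).subtype, fun g => rfl⟩
      have hι : ι ≫ f = 0 := by
        apply Action.hom_ext
        apply FGModuleCat.hom_ext
        apply LinearMap.ext
        rintro ⟨z, hz⟩
        rw [LinearMap.mem_ker] at hz
        exact hz
      have : ι = 0 := by
        rw [← Limits.zero_comp (f := f)] at hι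
        exact Mono.right_cancellation _ _ hι
      have := congrFun (congrArg DFunLike.coe (congrArg (fun φ => φ.hom.hom.hom) this)) ⟨x, hxK⟩
      simp only [Action.zero_hom] at this
      exact hx0 this
    -- F is bijective; build the inverse
    let e : Y.V ≃ₗ[ℂ] V := LinearEquiv.ofBijective F
      ⟨LinearMap.ker_eq_bot.mp hker, LinearMap.range_eq_top.mp hrange⟩
    haveI : IsIso f.hom := by
      refine ⟨(FGModuleCat.ofHom e.symm.toLinearMap : (FDRep.of ρ).V ⟶ Y.V), ?_, ?_⟩
      · apply FGModuleCat.hom_ext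
        apply LinearMap.ext; intro y
        exact e.symm_apply_apply y
      · apply FGModuleCat.hom_ext
        apply LinearMap.ext; intro v
        exact e.apply_symm_apply v
    infer_instance


lemma char_dim {χ : G → ℂ} (hχ : χ ∈ Irr G) : ∃ n : ℕ, 0 < n ∧ χ 1 = (n : ℂ) := by
  obtain ⟨V, hV, rfl⟩ := hχ
  haveI := hV
  haveI := simple_nontrivial V
  refine ⟨finrank ℂ V, finrank_pos, ?_⟩
  exact FDRep.char_one V

lemma endo_one_dim {V : Type} [AddCommGroup V] [Module ℂ V] [Module.Finite ℂ V]
    (h : finrank ℂ V = 1) (f : V →ₗ[ℂ] V) :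
    f = (LinearMap.trace ℂ V f) • LinearMap.id := by
  let b : Basis (Fin 1) ℂ V := finBasisOfFinrankEq ℂ V h
  have h2 : LinearMap.trace ℂ V f = b.repr (f (b 0)) 0 := by
    rw [LinearMap.trace_eq_matrix_trace ℂ b, Matrix.trace]
    simp [Matrix.diag, LinearMap.toMatrix_apply]
  apply b.ext
  intro i
  fin_cases i
  have h1 := b.sum_repr (f (b 0))
  rw [Fin.sum_univ_one] at h1
  rw [LinearMap.smul_apply, LinearMap.id_apply, h2]
  exact h1.symm

/-- one-dimensional representation from a homomorphism to `ℂˣ`. -/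
def linRep (φ : G →* ℂˣ) : Representation ℂ G ℂ where
  toFun g := ((φ g : ℂ) • LinearMap.id : ℂ →ₗ[ℂ] ℂ)
  map_one' := by ext x; simp
  map_mul' g h' := by
    ext x
    simp [Module.End.mul_apply, smul_smul, mul_comm]

lemma linRep_char (φ : G →* ℂˣ) :
    FDRep.character (FDRep.of (linRep φ)) = fun g => (φ g : ℂ) := by
  funext g
  show LinearMap.trace ℂ ℂ (((φ g : ℂ)) • LinearMap.id) = (φ g : ℂ)
  rw [map_smul, LinearMap.trace_id, smul_eq_mul]
  simp

lemma linRep_mem_irr (φ : G →* ℂˣ) : (fun g => (φ g : ℂ)) ∈ Irr G := by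
  refine ⟨FDRep.of (linRep φ), ?_, (linRep_char φ).symm⟩
  apply simple_of_no_invariant
  intro W hW
  rcases eq_or_ne W ⊥ with hb | hb
  · exact Or.inl hb
  · right
    obtain ⟨x, hxW, hx0⟩ := Submodule.exists_mem_ne_zero_of_ne_bot hb
    rw [Submodule.eq_top_iff']
    intro y
    have : y = (y * x⁻¹) • x := by rw [smul_eq_mul]; field_simp
    rw [this]
    exact W.smul_mem _ hxW

lemma card_linear :
    Nat.card {χ : G → ℂ // χ ∈ Irr G ∧ χ 1 = (1 : ℂ)} = Nat.card (G →* ℂˣ) := by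
  symm
  apply Nat.card_eq_of_bijective
    (fun φ => ⟨fun g => (φ g : ℂ), linRep_mem_irr φ, by simp⟩)
  constructor
  · intro φ φ' hh
    ext g
    exact congrFun (congrArg Subtype.val hh) g
  · rintro ⟨χ, ⟨V, hV, rfl⟩, h1⟩
    haveI := hV
    haveI := simple_nontrivial V
    have hfr : finrank ℂ V = 1 := by
      have := FDRep.char_one V
      rw [this] at h1
      exact_mod_cast h1
    have hsc : ∀ g : G, V.ρ g = (FDRep.character V g) • LinearMap.id := fun g =>
      endo_one_dim hfr (V.ρ g)
    have hmul : ∀ g h' : G, FDRep.character V (g * h') =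
        FDRep.character V g * FDRep.character V h' := by
      intro g h'
      show LinearMap.trace ℂ _ (V.ρ (g * h')) = _
      rw [map_mul]
      conv_lhs => rw [hsc g, hsc h']
      rw [smul_mul_assoc, mul_smul_comm, map_smul, map_smul]
      have hid : LinearMap.trace ℂ _ ((LinearMap.id : V →ₗ[ℂ] V) * LinearMap.id) = 1 := by
        rw [show ((LinearMap.id : V →ₗ[ℂ] V) * LinearMap.id) = LinearMap.id from rfl,
          LinearMap.trace_id, hfr, Nat.cast_one]
      rw [hid, smul_eq_mul, smul_eq_mul, mul_one]
    have hone : FDRep.character V 1 = 1 := h1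
    have hvi : ∀ g : G, FDRep.character V g * FDRep.character V g⁻¹ = 1 := by
      intro g; rw [← hmul, mul_inv_cancel, hone]
    have hiv : ∀ g : G, FDRep.character V g⁻¹ * FDRep.character V g = 1 := by
      intro g; rw [← hmul, inv_mul_cancel, hone]
    refine ⟨{ toFun := fun g =>
                Units.mk (FDRep.character V g) (FDRep.character V g⁻¹) (hvi g) (hiv g),
              map_one' := by ext; exact hone,
              map_mul' := fun g h' => by ext; exact hmul g h' }, ?_⟩
    apply Subtype.ext
    funext g
    rfl

lemma card_linear_eq_abel :
    Nat.card {χ : G → ℂ // χ ∈ Irr G ∧ χ 1 = (1 : ℂ)} = Nat.card (Abelianization G) := by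
  rw [card_linear]
  haveI : NeZero ((Monoid.exponent (Abelianization G) : ℂ)) :=
    ⟨by exact_mod_cast Monoid.exponent_ne_zero_of_finite⟩
  have e2 := (CommGroup.monoidHom_mulEquiv_of_hasEnoughRootsOfUnity (Abelianization G) ℂ).some
  calc Nat.card (G →* ℂˣ) = Nat.card (Abelianization G →* ℂˣ) :=
        Nat.card_congr Abelianization.lift
    _ = Nat.card (Abelianization G) := Nat.card_congr e2.toEquiv

lemma abel_dvd : Nat.card (Abelianization G) ∣ Nat.card G :=
  Subgroup.card_quotient_dvd_card (commutator G)

lemma abel_pos : 0 < Nat.card (Abelianization G) := Nat.card_pos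

instance : FiniteDimensional ℂ (MonoidAlgebra ℂ G) :=
  Module.Finite.of_basis (MonoidAlgebra.basis G ℂ)

/-- The left regular representation on the monoid algebra. -/
def ρreg : Representation ℂ G (MonoidAlgebra ℂ G) where
  toFun g := LinearMap.mulLeft ℂ (MonoidAlgebra.of ℂ G g)
  map_one' := by ext x; simp
  map_mul' g h := by ext x; simp [mul_assoc]

lemma ρreg_apply (g : G) (x : MonoidAlgebra ℂ G) :
    ρreg g x = MonoidAlgebra.of ℂ G g * x := rfl

lemma trace_ρreg (g : G) :
    LinearMap.trace ℂ (MonoidAlgebra ℂ G) (ρreg g)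
      = if g = 1 then (Fintype.card G : ℂ) else 0 := by
  classical
  let b : Basis G ℂ (MonoidAlgebra ℂ G) := MonoidAlgebra.basis G ℂ
  rw [LinearMap.trace_eq_matrix_trace ℂ b, Matrix.trace]
  have hdiag : ∀ h : G, (LinearMap.toMatrix b b (ρreg g)) h h
      = if g = 1 then (1 : ℂ) else 0 := by
    intro h
    rw [LinearMap.toMatrix_apply]
    have hb : b h = MonoidAlgebra.single h 1 := rfl
    have : ρreg g (b h) = MonoidAlgebra.single (g * h) 1 := by
      rw [hb, ρreg_apply]
      show MonoidAlgebra.single g 1 * MonoidAlgebra.single h 1 = _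
      rw [MonoidAlgebra.single_mul_single, one_mul]
    rw [this]
    show (Finsupp.single (g * h) (1:ℂ)) h = _
    rw [Finsupp.single_apply]
    congr 1
    simp [mul_eq_right]
  simp only [Matrix.diag, hdiag]
  rw [Finset.sum_const]
  split_ifs <;> simp [mul_comm]

section Decomp

abbrev MA (G : Type) [Group G] := MonoidAlgebra ℂ G

lemma restrict_indep {ι : Type} (t : ι → Submodule (MA G) (MA G)) (h : iSupIndep t) :
    iSupIndep (fun i => (t i).restrictScalars ℂ) := by
  intro i
  have h1 : (⨆ (j) (_ : j ≠ i), (t j).restrictScalars ℂ)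
      ≤ ((⨆ (j) (_ : j ≠ i), t j).restrictScalars ℂ) := by
    refine iSup_le fun j => iSup_le fun hj => ?_
    intro x hx
    rw [Submodule.restrictScalars_mem] at hx ⊢
    exact Submodule.mem_iSup_of_mem j (Submodule.mem_iSup_of_mem hj hx)
  refine Disjoint.mono_right h1 ?_
  rw [Submodule.disjoint_def]
  intro x hx hx'
  rw [Submodule.restrictScalars_mem] at hx hx'
  exact Submodule.disjoint_def.mp (h i) x hx hx'

lemma restrict_iSup_top {ι : Type} (t : ι → Submodule (MA G) (MA G))
    (h : (⨆ i, t i) = ⊤) : (⨆ i, (t i).restrictScalars ℂ) = ⊤ := by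
  rw [eq_top_iff]
  intro x _
  have hx : x ∈ ⨆ i, t i := by rw [h]; trivial
  refine Submodule.iSup_induction t (motive := fun y => y ∈ ⨆ i, (t i).restrictScalars ℂ) hx ?_ ?_ ?_
  · intro i y hy
    exact Submodule.mem_iSup_of_mem i (by rwa [Submodule.restrictScalars_mem])
  · exact Submodule.zero_mem _
  · intro y z hy hz
    exact Submodule.add_mem _ hy hz

lemma smul_mono_invariant (m : Submodule (MA G) (MA G)) :
    ∀ g : G, ∀ x ∈ m.restrictScalars ℂ, ρreg g x ∈ m.restrictScalars ℂ := by
  intro g x hx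
  rw [Submodule.restrictScalars_mem] at hx ⊢
  rw [ρreg_apply, ← smul_eq_mul]
  exact m.smul_mem _ hx

/-- The FDRep attached to a `MonoidAlgebra`-submodule of the regular representation. -/
def VS (m : Submodule (MA G) (MA G)) : FDRep ℂ G :=
  FDRep.of (subrep ρreg (m.restrictScalars ℂ) (smul_mono_invariant m))

lemma VS_simple (m : Submodule (MA G) (MA G)) (hm : IsSimpleModule (MA G) m) :
    Simple (VS m) := by
  haveI : Nontrivial (m.restrictScalars ℂ) := by
    have := hm.nontrivial
    exact inferInstanceAs (Nontrivial m)
  apply simple_of_no_invariant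
  intro T hT
  haveI := hm
  -- promote T to a `MonoidAlgebra`-submodule of `m`
  let T' : Submodule (MA G) m :=
    { carrier := (fun (x : (m.restrictScalars ℂ : Submodule ℂ (MA G))) => (⟨x.1, x.2⟩ : m)) '' T
      add_mem' := by
        rintro a b ⟨x, hx, rfl⟩ ⟨y, hy, rfl⟩
        exact ⟨x + y, T.add_mem hx hy, rfl⟩
      zero_mem' := ⟨0, T.zero_mem, rfl⟩
      smul_mem' := by
        intro c a ha
        induction c using MonoidAlgebra.induction_on with
        | of g =>
          obtain ⟨x, hx, rfl⟩ := ha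
          refine ⟨(subrep ρreg (m.restrictScalars ℂ) (smul_mono_invariant m)) g x,
            hT g x hx, ?_⟩
          apply Subtype.ext
          rfl
        | add f g hf hg =>
          rw [add_smul]
          obtain ⟨x, hx, hxe⟩ := hf
          obtain ⟨y, hy, hye⟩ := hg
          exact ⟨x + y, T.add_mem hx hy, by
            apply Subtype.ext
            have ex := congrArg Subtype.val hxe
            have ey := congrArg Subtype.val hye
            simp only [Submodule.coe_add]
            rw [ex, ey]⟩
        | smul r f hf =>
          obtain ⟨x, hx, hxe⟩ := hf
          rw [smul_assoc]
          exact ⟨r • x, T.smul_mem r hx, by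
            apply Subtype.ext
            have ex := congrArg Subtype.val hxe
            simp only [Submodule.coe_smul]
            rw [ex]
            rfl⟩ }
  rcases eq_bot_or_eq_top T' with hb | ht
  · left
    rw [eq_bot_iff]
    intro x hx
    have : (⟨x.1, x.2⟩ : m) ∈ T' := ⟨x, hx, rfl⟩
    rw [hb] at this
    have : x.1 = 0 := congrArg Subtype.val this
    exact (Submodule.mem_bot ℂ).mpr (Subtype.ext this)
  · right
    rw [eq_top_iff]
    intro x _
    have : (⟨x.1, x.2⟩ : m) ∈ T' := by rw [ht]; trivial
    obtain ⟨y, hy, hye⟩ := this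
    have : y = x := Subtype.ext (congrArg Subtype.val hye)
    rwa [← this]

end Decomp

lemma sum_sq :
    ∑ χ ∈ (irr_finite (G := G)).toFinset, (χ 1)^2 = (Fintype.card G : ℂ) := by
  classical
  obtain ⟨s, hind, htop, hsimple⟩ :=
    IsSemisimpleModule.exists_sSupIndep_sSup_simples_eq_top (MA G) (MA G)
  have hindep : iSupIndep ((↑) : s → Submodule (MA G) (MA G)) := (sSupIndep_iff s).mp hind
  have hnb : ∀ m : s, ((m : Submodule (MA G) (MA G)).restrictScalars ℂ) ≠ ⊥ := by
    intro m h
    have hbot : (m : Submodule (MA G) (MA G)) = ⊥ := by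
      rw [eq_bot_iff]
      intro x hx
      have hx' : x ∈ (m : Submodule (MA G) (MA G)).restrictScalars ℂ := hx
      rw [h] at hx'
      simpa using hx'
    haveI := (hsimple m m.2).nontrivial
    obtain ⟨x, y, hxy⟩ := exists_pair_ne (↥(m : Submodule (MA G) (MA G)))
    apply hxy
    apply Subtype.ext
    have hx' : (x : MA G) ∈ (⊥ : Submodule (MA G) (MA G)) := by rw [← hbot]; exact x.2
    have hy' : (y : MA G) ∈ (⊥ : Submodule (MA G) (MA G)) := by rw [← hbot]; exact y.2
    rw [Submodule.mem_bot] at hx' hy'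
    rw [hx', hy']
  haveI : Fintype {m : s // ((m : Submodule (MA G) (MA G)).restrictScalars ℂ) ≠ ⊥} :=
    (restrict_indep _ hindep).fintypeNeBotOfFiniteDimensional
  haveI : Finite s := Finite.of_equiv _ (Equiv.subtypeUnivEquiv hnb)
  haveI : Fintype s := Fintype.ofFinite _
  have hint : DirectSum.IsInternal
      (fun m : s => (m : Submodule (MA G) (MA G)).restrictScalars ℂ) := by
    apply DirectSum.isInternal_submodule_of_iSupIndep_of_iSup_eq_top
    · exact restrict_indep _ hindep
    · apply restrict_iSup_top
      rw [← sSup_eq_iSup']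
      exact htop
  have hchar : ∀ g : G, (if g = 1 then (Fintype.card G : ℂ) else 0)
      = ∑ m : s, FDRep.character (VS (m : Submodule (MA G) (MA G))) g := by
    intro g
    rw [← trace_ρreg g]
    exact LinearMap.trace_eq_sum_trace_restrict hint
      (fun m => fun x hx => smul_mono_invariant (m : Submodule (MA G) (MA G)) g x hx)
  have hIrr : ∀ m : s, FDRep.character (VS (m : Submodule (MA G) (MA G))) ∈ Irr G :=
    fun m => ⟨VS _, VS_simple _ (hsimple m m.2), rfl⟩
  set T := (irr_finite (G := G)).toFinset with hT
  have hmult : ∀ χ ∈ T, ((Finset.univ.filter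
      (fun m : s => FDRep.character (VS (m : Submodule (MA G) (MA G))) = χ)).card : ℂ)
      = χ 1 := by
    intro χ hχT
    have hχ : χ ∈ Irr G := (Set.Finite.mem_toFinset _).mp hχT
    have h1 : innL χ (fun g => if g = 1 then (Fintype.card G : ℂ) else 0) = χ 1 := by
      show inn _ χ = _
      unfold inn
      have : ∀ g : G, (if g = 1 then (Fintype.card G : ℂ) else 0) * χ g⁻¹
          = if g = 1 then (Fintype.card G : ℂ) * χ g⁻¹ else 0 := by
        intro g; split_ifs <;> simp
      simp only [this]
      rw [Finset.sum_ite_eq' Finset.univ (1 : G) (fun g => (Fintype.card G : ℂ) * χ g⁻¹)]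
      simp only [Finset.mem_univ, if_true, inv_one]
      rw [← mul_assoc, inv_mul_cancel₀ card_ne_zero, one_mul]
    have h2 : innL χ (fun g => if g = 1 then (Fintype.card G : ℂ) else 0)
        = ∑ m : s, innL χ (FDRep.character (VS (m : Submodule (MA G) (MA G)))) := by
      rw [show (fun g => if g = 1 then (Fintype.card G : ℂ) else 0)
        = ∑ m : s, FDRep.character (VS (m : Submodule (MA G) (MA G))) from
          funext (fun g => by rw [hchar g]; simp), map_sum]
    rw [h2] at h1
    rw [← h1]
    have : ∀ m : s, innL χ (FDRep.character (VS (m : Submodule (MA G) (MA G))))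
        = if FDRep.character (VS (m : Submodule (MA G) (MA G))) = χ then 1 else 0 := by
      intro m
      show inn _ _ = _
      exact inn_ite (hIrr m) hχ
    simp only [this]
    rw [Finset.sum_boole]
    try simp
  have h3 : (Fintype.card G : ℂ)
      = ∑ m : s, FDRep.character (VS (m : Submodule (MA G) (MA G))) 1 := by
    have := hchar 1
    simpa using this
  have h4 := Finset.sum_fiberwise_of_maps_to (g := fun m : s =>
      FDRep.character (VS (m : Submodule (MA G) (MA G)))) (s := Finset.univ) (t := T)
    (fun m _ => (Set.Finite.mem_toFinset _).mpr (hIrr m))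
    (fun m => FDRep.character (VS (m : Submodule (MA G) (MA G))) 1)
  rw [← h4] at h3
  rw [h3]
  apply Finset.sum_congr rfl
  intro χ hχT
  have : ∀ m ∈ Finset.univ.filter
      (fun m : s => FDRep.character (VS (m : Submodule (MA G) (MA G))) = χ),
      FDRep.character (VS (m : Submodule (MA G) (MA G))) 1 = χ 1 := by
    intro m hm
    rw [Finset.mem_filter] at hm
    rw [hm.2]
  rw [Finset.sum_congr rfl this, Finset.sum_const, nsmul_eq_mul, hmult χ hχT, sq]

end ADProof

theorem stmt_0 (G : Type) [Group G] [Finite G]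
    (h : ∀ χ ∈ Irr G, deg χ ≤ 2) :
    ∃ n : ℕ, 0 < n ∧ AD G = 2 - 1 / (n : ℝ) := by
  classical
  letI : Fintype G := Fintype.ofFinite G
  open ADProof in
  set T := (ADProof.irr_finite (G := G)).toFinset with hTdef
  -- each character value at 1 is 1 or 2
  have hval : ∀ χ ∈ T, χ 1 = (1 : ℂ) ∨ χ 1 = (2 : ℂ) := by
    intro χ hχT
    have hχ : χ ∈ Irr G := (Set.Finite.mem_toFinset _).mp hχT
    obtain ⟨n, hn0, hn⟩ := ADProof.char_dim hχ
    have hd : deg χ = (n : ℝ) := by rw [deg, hn]; simp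
    have hn2 : n ≤ 2 := by
      have := h χ hχ
      rw [hd] at this
      exact_mod_cast this
    interval_cases n
    · exact Or.inl (by rw [hn]; norm_num)
    · exact Or.inr (by rw [hn]; norm_num)
  set S1 := T.filter (fun χ => χ 1 = (1 : ℂ)) with hS1
  set S2 := T.filter (fun χ => ¬ (χ 1 = (1 : ℂ))) with hS2
  have hS2val : ∀ χ ∈ S2, χ 1 = (2 : ℂ) := by
    intro χ hχ
    rw [hS2, Finset.mem_filter] at hχ
    rcases hval χ hχ.1 with h1 | h2
    · exact absurd h1 hχ.2
    · exact h2
  set a := S1.card with ha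
  set b := S2.card with hb
  -- |G| = a + 4b
  have hsum := ADProof.sum_sq (G := G)
  have hsplit : ∑ χ ∈ T, (χ 1)^2
      = ∑ χ ∈ S1, (χ 1)^2 + ∑ χ ∈ S2, (χ 1)^2 :=
    (Finset.sum_filter_add_sum_filter_not T _ _).symm
  have hc1 : ∀ χ ∈ S1, (χ 1)^2 = (1 : ℂ) := by
    intro χ hχ
    rw [(Finset.mem_filter.mp hχ).2, one_pow]
  have hc2 : ∀ χ ∈ S2, (χ 1)^2 = (4 : ℂ) := by
    intro χ hχ
    rw [hS2val χ hχ]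
    norm_num
  have hsum1 : ∑ χ ∈ S1, (χ 1)^2 = (a : ℂ) := by
    rw [Finset.sum_congr rfl hc1, Finset.sum_const, nsmul_eq_mul, mul_one]
  have hsum2 : ∑ χ ∈ S2, (χ 1)^2 = 4 * (b : ℂ) := by
    rw [Finset.sum_congr rfl hc2, Finset.sum_const, nsmul_eq_mul]
    ring
  have hcardC : (Fintype.card G : ℂ) = (a : ℂ) + 4 * (b : ℂ) := by
    rw [← hsum, hsplit, hsum1, hsum2]
  have hcardN : Fintype.card G = a + 4 * b := by
    have : ((Fintype.card G : ℕ) : ℂ) = ((a + 4 * b : ℕ) : ℂ) := by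
      rw [hcardC]; push_cast; ring
    exact_mod_cast this
  -- a = Nat.card (Abelianization G)
  have haabel : a = Nat.card (Abelianization G) := by
    rw [← ADProof.card_linear_eq_abel]
    have e : {χ : G → ℂ // χ ∈ Irr G ∧ χ 1 = (1:ℂ)} ≃ {χ : G → ℂ // χ ∈ S1} := by
      apply Equiv.subtypeEquivRight
      intro χ
      rw [hS1, Finset.mem_filter, Set.Finite.mem_toFinset]
    rw [Nat.card_congr e, Nat.card_eq_fintype_card, Fintype.card_coe]
  have hapos : 0 < a := haabel ▸ ADProof.abel_pos
  have hadvd : a ∣ Fintype.card G := by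
    rw [haabel, ← Nat.card_eq_fintype_card]
    exact ADProof.abel_dvd
  refine ⟨Fintype.card G / a, ?_, ?_⟩
  · exact Nat.div_pos (Nat.le_of_dvd Fintype.card_pos hadvd) hapos
  · -- compute AD G
    have hdeg1 : ∀ χ ∈ S1, deg χ = 1 := by
      intro χ hχ
      rw [deg, (Finset.mem_filter.mp hχ).2]
      norm_num
    have hdeg2 : ∀ χ ∈ S2, deg χ = 2 := by
      intro χ hχ
      rw [deg, hS2val χ hχ]
      norm_num
    have hAD : AD G = (1 / (Fintype.card G : ℝ)) * ((a : ℝ) + 8 * (b : ℝ)) := by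
      rw [AD, Nat.card_eq_fintype_card]
      congr 1
      have hcoe : Irr G = (T : Set (G → ℂ)) := (Set.Finite.coe_toFinset _).symm
      rw [hcoe, finsum_mem_coe_finset]
      have hsplit3 : ∑ χ ∈ T, deg χ ^ 3
          = ∑ χ ∈ S1, deg χ ^ 3 + ∑ χ ∈ S2, deg χ ^ 3 :=
        (Finset.sum_filter_add_sum_filter_not T _ _).symm
      have hd1 : ∀ χ ∈ S1, deg χ ^ 3 = (1 : ℝ) := by
        intro χ hχ; rw [hdeg1 χ hχ]; norm_num
      have hd2 : ∀ χ ∈ S2, deg χ ^ 3 = (8 : ℝ) := by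
        intro χ hχ; rw [hdeg2 χ hχ]; norm_num
      rw [hsplit3, Finset.sum_congr rfl hd1, Finset.sum_congr rfl hd2,
        Finset.sum_const, Finset.sum_const, nsmul_eq_mul, nsmul_eq_mul]
      push_cast
      ring
    have hcard0 : ((Fintype.card G : ℝ)) ≠ 0 := by
      exact_mod_cast Fintype.card_ne_zero
    have hn0 : ((Fintype.card G / a : ℕ) : ℝ) ≠ 0 := by
      have : 0 < Fintype.card G / a := Nat.div_pos (Nat.le_of_dvd Fintype.card_pos hadvd) hapos
      exact_mod_cast this.ne'
    have hna : ((Fintype.card G / a : ℕ) : ℝ) * (a : ℝ) = (Fintype.card G : ℝ) := by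
      exact_mod_cast congrArg (Nat.cast : ℕ → ℝ) (Nat.div_mul_cancel hadvd)
    have hcardR : (Fintype.card G : ℝ) = (a : ℝ) + 4 * (b : ℝ) := by
      exact_mod_cast congrArg (Nat.cast : ℕ → ℝ) hcardN
    rw [hAD]
    field_simp
    nlinarith [hna, hcardR]
end
end

section
/- Let G be a finite group, let φ be an irreducible complex character of G of degree n, and let K be the normal subgroup of G generated by the support supp(φ) = {x ∈ G : φ(x) ≠ 0}. Then the number of irreducible complex characters of G of degree n is at least |Irr₁(G)| / [G : K], where Irr₁(G) is the set of degree-1 characters of G. -/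
noncomputable section

/-- `IrrDeg G n` is the set of irreducible complex characters of `G` of degree `n`. -/
def IrrDeg (G : Type) [Group G] (n : ℕ) : Set (G → ℂ) :=
  {χ ∈ Irr G | χ 1 = (n : ℂ)}

open CategoryTheory Module
open scoped Classical

section Twist

variable {G : Type} [Group G]

/-- Twist a representation by a linear character. -/
def twistRep (l : G →* ℂˣ) {M : Type} [AddCommGroup M] [Module ℂ M]
    (ρ : Representation ℂ G M) : Representation ℂ G M where
  toFun g := ((l g : ℂˣ) : ℂ) • ρ g
  map_one' := by simp
  map_mul' g h := by
    simp only [map_mul, Units.val_mul]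
    rw [smul_mul_smul_comm]

/-- Twist a finite-dimensional representation by a linear character. -/
def tw (l : G →* ℂˣ) (V : FDRep ℂ G) : FDRep ℂ G := FDRep.of (twistRep l V.ρ)

lemma tw_ρ (l : G →* ℂˣ) (V : FDRep ℂ G) (g : G) :
    (tw l V).ρ g = ((l g : ℂˣ) : ℂ) • V.ρ g := rfl

lemma tw_char (l : G →* ℂˣ) (V : FDRep ℂ G) (g : G) :
    (tw l V).character g = ((l g : ℂˣ) : ℂ) * V.character g := by
  simp only [FDRep.character, tw_ρ, LinearMap.map_smul, smul_eq_mul]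
  exact map_smul (LinearMap.trace ℂ V.V) _ _

/-- Transfer a morphism into a twisted rep. -/
def twHomA {l m : G →* ℂˣ} (hml : ∀ g, ((m g : ℂˣ) : ℂ) * ((l g : ℂˣ) : ℂ) = 1)
    {A B : FDRep ℂ G} (f : A ⟶ tw l B) : tw m A ⟶ B where
  hom := f.hom
  comm g := by
    ext v
    have hc := congrArg (fun (φ : A.V ⟶ (tw l B).V) => φ.hom v) (f.comm g)
    show f.hom (((m g : ℂ) • A.ρ g) v) = B.ρ g (f.hom v)
    change f.hom ((m g : ℂ) • A.ρ g v) = _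
    rw [map_smul]
    have hc' : f.hom (A.ρ g v) = ((l g : ℂ) • B.ρ g) (f.hom v) := hc
    rw [hc']
    erw [LinearMap.smul_apply, smul_smul, hml g, one_smul]

/-- Transfer a morphism out of a twisted rep. -/
def twHomB {l m : G →* ℂˣ} (hml : ∀ g, ((m g : ℂˣ) : ℂ) * ((l g : ℂˣ) : ℂ) = 1)
    {A B : FDRep ℂ G} (f : tw l A ⟶ B) : A ⟶ tw m B where
  hom := f.hom
  comm g := by
    ext v
    have hc := congrArg (fun (φ : (tw l A).V ⟶ B.V) => φ.hom v) (f.comm g)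
    show f.hom (A.ρ g v) = ((m g : ℂ) • B.ρ g) (f.hom v)
    have hc' : f.hom (((l g : ℂ) • A.ρ g) v) = B.ρ g (f.hom v) := hc
    change f.hom ((l g : ℂ) • A.ρ g v) = _ at hc'
    erw [map_smul] at hc'
    rw [LinearMap.smul_apply]
    rw [← hc', smul_smul, hml g, one_smul]

lemma twHomA_hom {l m : G →* ℂˣ} (hml : ∀ g, ((m g : ℂˣ) : ℂ) * ((l g : ℂˣ) : ℂ) = 1)
    {A B : FDRep ℂ G} (f : A ⟶ tw l B) : (twHomA hml f).hom = f.hom := rfl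

lemma twHomB_hom {l m : G →* ℂˣ} (hml : ∀ g, ((m g : ℂˣ) : ℂ) * ((l g : ℂˣ) : ℂ) = 1)
    {A B : FDRep ℂ G} (f : tw l A ⟶ B) : (twHomB hml f).hom = f.hom := rfl

lemma inv_mul_l (l : G →* ℂˣ) : ∀ g, ((l⁻¹ g : ℂˣ) : ℂ) * ((l g : ℂˣ) : ℂ) = 1 := by
  intro g
  rw [← Units.val_mul]
  simp

lemma mul_inv_l (l : G →* ℂˣ) : ∀ g, ((l g : ℂˣ) : ℂ) * ((l⁻¹ g : ℂˣ) : ℂ) = 1 := by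
  intro g
  rw [← Units.val_mul]
  simp

lemma tw_simple (l : G →* ℂˣ) (V : FDRep ℂ G) [hV : Simple V] : Simple (tw l V) := by
  constructor
  intro Y f hf
  let f' : tw l⁻¹ Y ⟶ V := twHomA (inv_mul_l l) f
  have hf'hom : f'.hom = f.hom := rfl
  haveI : Mono f' := by
    constructor
    intro Z g h we
    have hgf : twHomA (mul_inv_l l) g ≫ f = twHomA (mul_inv_l l) h ≫ f := by
      apply Action.hom_ext
      rw [Action.comp_hom, Action.comp_hom, twHomA_hom, twHomA_hom]
      have := congrArg Action.Hom.hom we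
      rw [Action.comp_hom, Action.comp_hom, hf'hom] at this
      exact this
    have h3 := (cancel_mono f).mp hgf
    have h4 : (twHomA (mul_inv_l l) g).hom = (twHomA (mul_inv_l l) h).hom :=
      congrArg Action.Hom.hom h3
    exact Action.hom_ext g h h4
  have key : IsIso f' ↔ f' ≠ 0 := Simple.mono_isIso_iff_nonzero f'
  have hiso : IsIso f ↔ IsIso f' := by
    constructor
    · intro hi
      refine ⟨twHomB (inv_mul_l l) (inv f), ?_, ?_⟩
      · apply Action.hom_ext
        rw [Action.comp_hom, twHomB_hom, hf'hom, Action.id_hom]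
        erw [← Action.comp_hom,
          IsIso.hom_inv_id, Action.id_hom]
        rfl
      · apply Action.hom_ext
        rw [Action.comp_hom, twHomB_hom, hf'hom, Action.id_hom]
        erw [← Action.comp_hom,
          IsIso.inv_hom_id, Action.id_hom]
        rfl
    · intro hi
      refine ⟨twHomA (mul_inv_l l) (inv f'), ?_, ?_⟩
      · apply Action.hom_ext
        rw [Action.comp_hom, twHomA_hom, ← hf'hom, Action.id_hom]
        erw [← Action.comp_hom,
          IsIso.hom_inv_id, Action.id_hom]
        rfl
      · apply Action.hom_ext
        rw [Action.comp_hom, twHomA_hom, ← hf'hom, Action.id_hom]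
        erw [← Action.comp_hom,
          IsIso.inv_hom_id, Action.id_hom]
        rfl
  have hzero : f = 0 ↔ f' = 0 := by
    constructor
    · intro hz
      apply Action.hom_ext
      rw [hf'hom, hz, Action.zero_hom, Action.zero_hom]; rfl
    · intro hz
      apply Action.hom_ext
      rw [← hf'hom, hz, Action.zero_hom, Action.zero_hom]; rfl
  rw [hiso, key]
  exact not_congr hzero.symm

end Twist

section OneDim

lemma trace_comp_one_dim {M : Type} [AddCommGroup M] [Module ℂ M] [FiniteDimensional ℂ M]
    (h1 : finrank ℂ M = 1) (f g : M →ₗ[ℂ] M) :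
    LinearMap.trace ℂ M (f ∘ₗ g) = LinearMap.trace ℂ M f * LinearMap.trace ℂ M g := by
  let b : Basis (Fin 1) ℂ M := Module.finBasisOfFinrankEq ℂ M h1
  rw [LinearMap.trace_eq_matrix_trace ℂ b, LinearMap.trace_eq_matrix_trace ℂ b,
    LinearMap.trace_eq_matrix_trace ℂ b, LinearMap.toMatrix_comp b b b]
  simp [Matrix.trace, Matrix.mul_apply]

variable {G : Type} [Group G]

lemma char_mul_of_one_dim (V : FDRep ℂ G) (h1 : finrank ℂ V = 1) (g h : G) :
    V.character (g * h) = V.character g * V.character h := by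
  unfold FDRep.character
  rw [map_mul]
  exact trace_comp_one_dim h1 (V.ρ g) (V.ρ h)

/-- A degree-one irreducible character comes from a homomorphism to `ℂˣ`. -/
lemma exists_unitHom {ψ : G → ℂ} (hψ : ψ ∈ IrrDeg G 1) :
    ∃ l : G →* ℂˣ, ∀ g, ((l g : ℂˣ) : ℂ) = ψ g := by
  obtain ⟨⟨V, hV, hch⟩, h1⟩ := hψ
  have hr : finrank ℂ V = 1 := by
    have hco := FDRep.char_one V
    rw [← hch, h1] at hco
    exact_mod_cast hco.symm
  have hmul : ∀ g h : G, ψ (g * h) = ψ g * ψ h := by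
    intro g h
    rw [hch]
    exact char_mul_of_one_dim V hr g h
  have h1' : ψ 1 = 1 := by simpa using h1
  have hinv : ∀ g : G, ψ g * ψ g⁻¹ = 1 := by
    intro g
    rw [← hmul, mul_inv_cancel, h1']
  have hinv' : ∀ g : G, ψ g⁻¹ * ψ g = 1 := by
    intro g
    rw [← hmul, inv_mul_cancel, h1']
  refine ⟨{ toFun := fun g => ⟨ψ g, ψ g⁻¹, hinv g, hinv' g⟩,
            map_one' := ?_, map_mul' := ?_ }, fun g => rfl⟩
  · exact Units.ext h1'
  · intro a b
    exact Units.ext (hmul a b)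

end OneDim

section Orth

variable {G : Type} [Group G] [Fintype G]

lemma pair_orth (V W : FDRep ℂ G) [Simple V] [Simple W] :
    ∑ g : G, V.character g * W.character g⁻¹ =
      if Nonempty (V ≅ W) then (Fintype.card G : ℂ) else 0 := by
  have h := FDRep.char_orthonormal V W
  have hc : (Nat.card G : ℂ) ≠ 0 := Nat.cast_ne_zero.mpr Nat.card_pos.ne'
  rw [inv_mul_eq_iff_eq_mul₀ hc] at h
  rw [h, Nat.card_eq_fintype_card]
  split_ifs <;> simp

lemma irr_pair (ψ ψ' : G → ℂ) (hψ : ψ ∈ Irr G) (hψ' : ψ' ∈ Irr G) :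
    ∑ g : G, ψ g * ψ' g⁻¹ = if ψ = ψ' then (Fintype.card G : ℂ) else 0 := by
  obtain ⟨V, hV, rfl⟩ := hψ
  obtain ⟨W, hW, rfl⟩ := hψ'
  haveI := hV; haveI := hW
  rw [pair_orth V W]
  by_cases h : FDRep.character V = FDRep.character W
  · rw [if_pos h]
    by_cases hne : Nonempty (V ≅ W)
    · rw [if_pos hne]
    · exfalso
      have hp := pair_orth V W
      rw [if_neg hne, ← h] at hp
      have hself := pair_orth V V
      rw [if_pos ⟨Iso.refl V⟩] at hself
      exact Nat.cast_ne_zero.mpr Fintype.card_ne_zero (hself.symm.trans hp)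
  · have hni : ¬ Nonempty (V ≅ W) := fun ⟨i⟩ => h (FDRep.char_iso i)
    rw [if_neg hni, if_neg h]

lemma irr_linearIndependent : LinearIndependent ℂ (fun χ : (Irr G) => (χ : G → ℂ)) := by
  rw [linearIndependent_iff']
  intro s cc hsum i₀ hi₀
  have hg : ∀ g : G, ∑ i ∈ s, cc i * (i : G → ℂ) g = 0 := by
    intro g
    have := congrFun hsum g
    simpa using this
  have e1 : ∑ i ∈ s, cc i * ∑ g : G, (i : G → ℂ) g * (i₀ : G → ℂ) g⁻¹ = 0 := by
    calc ∑ i ∈ s, cc i * ∑ g : G, (i : G → ℂ) g * (i₀ : G → ℂ) g⁻¹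
        = ∑ i ∈ s, ∑ g : G, cc i * ((i : G → ℂ) g * (i₀ : G → ℂ) g⁻¹) := by
          simp_rw [Finset.mul_sum]
      _ = ∑ g : G, ∑ i ∈ s, cc i * ((i : G → ℂ) g * (i₀ : G → ℂ) g⁻¹) := Finset.sum_comm
      _ = ∑ g : G, (∑ i ∈ s, cc i * (i : G → ℂ) g) * (i₀ : G → ℂ) g⁻¹ := by
          simp_rw [Finset.sum_mul, mul_assoc]
      _ = 0 := by simp [hg]
  have e2 : ∀ i : ↥(Irr G), ∑ g : G, (i : G → ℂ) g * (i₀ : G → ℂ) g⁻¹ =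
      if i = i₀ then (Fintype.card G : ℂ) else 0 := by
    intro i
    rw [irr_pair (i : G → ℂ) (i₀ : G → ℂ) i.2 i₀.2]
    congr 1
    simp [Subtype.ext_iff]
  simp_rw [e2, mul_ite, mul_zero] at e1
  rw [Finset.sum_ite_eq' s i₀ (fun i => cc i * (Fintype.card G : ℂ)), if_pos hi₀] at e1
  rcases mul_eq_zero.mp e1 with h | h
  · exact h
  · exact absurd h (Nat.cast_ne_zero.mpr Fintype.card_ne_zero)

lemma irr_finite : (Irr G).Finite := by
  have h := irr_linearIndependent (G := G)
  have : Finite ↥(Irr G) := h.finite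
  exact Set.toFinite _

end Orth

theorem stmt_10 (G : Type) [Group G] [Finite G]
    (χ : G → ℂ) (n : ℕ) (hχ : χ ∈ IrrDeg G n)
    (K : Subgroup G) (hK : K = Subgroup.normalClosure {x : G | χ x ≠ 0}) :
    ((IrrDeg G 1).ncard : ℝ) / (K.index : ℝ) ≤ ((IrrDeg G n).ncard : ℝ) := by
  classical
  haveI := Fintype.ofFinite G
  obtain ⟨hχI, hχ1⟩ := hχ
  obtain ⟨V, hSV, hchar⟩ := hχI
  haveI := hSV
  haveI : K.Normal := by rw [hK]; exact Subgroup.normalClosure_normal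
  have hLfin : (IrrDeg G 1).Finite := irr_finite.subset (fun x hx => hx.1)
  have hSfin : (IrrDeg G n).Finite := irr_finite.subset (fun x hx => hx.1)
  have hidx0 : K.index ≠ 0 := Subgroup.index_ne_zero_of_finite
  have hidxpos : (0:ℝ) < (K.index : ℝ) := by
    exact_mod_cast Nat.pos_of_ne_zero hidx0
  rw [div_le_iff₀ hidxpos]
  -- the choice of unit homs
  have hch : ∀ ψ : G → ℂ, ∃ l : G →* ℂˣ, ψ ∈ IrrDeg G 1 → ∀ g, ((l g : ℂˣ) : ℂ) = ψ g := by
    intro ψ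
    by_cases h : ψ ∈ IrrDeg G 1
    · obtain ⟨l, hl⟩ := exists_unitHom h
      exact ⟨l, fun _ => hl⟩
    · exact ⟨1, fun hc => absurd hc h⟩
  choose lf hlf using hch
  set Q := G ⧸ K with hQ
  haveI : Finite Q := inferInstance
  haveI : Finite (Q →* ℂ) := by
    haveI := Fintype.ofFinite Q
    exact (linearIndependent_monoidHom Q ℂ).finite
  have hQcard : Nat.card (Q →* ℂ) ≤ K.index := by
    haveI := Fintype.ofFinite Q
    haveI := Fintype.ofFinite (Q →* ℂ)
    have h1 := (linearIndependent_monoidHom Q ℂ).fintype_card_le_finrank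
    rw [Module.finrank_pi ℂ] at h1
    rw [Nat.card_eq_fintype_card]
    calc Fintype.card (Q →* ℂ) ≤ Fintype.card Q := h1
      _ = Nat.card Q := (Nat.card_eq_fintype_card).symm
      _ = K.index := rfl
  -- the multiplication map
  set F : (G → ℂ) → (G → ℂ) := fun ψ => ψ * χ with hF
  set Lf := hLfin.toFinset with hLf
  set Sf := hSfin.toFinset with hSf
  have hmaps : ∀ ψ ∈ Lf, F ψ ∈ Sf := by
    intro ψ hψ
    rw [hLf, Set.Finite.mem_toFinset] at hψ
    rw [hSf, Set.Finite.mem_toFinset]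
    have hl := hlf ψ hψ
    haveI : CategoryTheory.Simple (tw (lf ψ) V) := tw_simple _ V
    refine ⟨⟨tw (lf ψ) V, inferInstance, ?_⟩, ?_⟩
    · funext g
      rw [tw_char, hl g]
      show ψ g * χ g = ψ g * V.character g
      rw [hchar]
    · show (ψ * χ) 1 = (n : ℂ)
      have : ψ 1 = 1 := by exact_mod_cast hψ.2
      rw [Pi.mul_apply, this, one_mul, hχ1]
  have hfib : ∀ b ∈ Sf, (Lf.filter fun a => F a = b).card ≤ K.index := by
    intro b hb
    set T := Lf.filter fun a => F a = b with hT
    rcases T.eq_empty_or_nonempty with he | ⟨ψ₀, hψ₀⟩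
    · rw [he]; simp
    have hψ₀L : ψ₀ ∈ IrrDeg G 1 := by
      have := (Finset.mem_filter.mp hψ₀).1
      rwa [hLf, Set.Finite.mem_toFinset] at this
    have hFψ₀ : F ψ₀ = b := (Finset.mem_filter.mp hψ₀).2
    -- injection of the fiber into homs Q →* ℂ
    have hker : ∀ a : G → ℂ, a ∈ T → K ≤ ((lf a) * (lf ψ₀)⁻¹).ker := by
      intro a ha
      have haL : a ∈ IrrDeg G 1 := by
        have := (Finset.mem_filter.mp ha).1
        rwa [hLf, Set.Finite.mem_toFinset] at this
      have hFa : F a = b := (Finset.mem_filter.mp ha).2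
      rw [hK]
      apply Subgroup.normalClosure_le_normal
      intro x hx
      have hxval : a x * χ x = ψ₀ x * χ x := by
        have := congrFun (hFa.trans hFψ₀.symm) x
        simpa [hF] using this
      have hax : a x = ψ₀ x := mul_right_cancel₀ hx hxval
      have hux : lf a x = lf ψ₀ x := by
        apply Units.ext
        rw [hlf a haL x, hlf ψ₀ hψ₀L x, hax]
      have : ((lf a) * (lf ψ₀)⁻¹) x = 1 := by
        rw [MonoidHom.mul_apply, MonoidHom.inv_apply, hux, mul_inv_cancel]
      exact this
    let Φ : {a // a ∈ T} → (Q →* ℂ) := fun a =>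
      (Units.coeHom ℂ).comp (QuotientGroup.lift K ((lf a.1) * (lf ψ₀)⁻¹) (hker a.1 a.2))
    have hinj : Function.Injective Φ := by
      intro a a' hpe
      have haL : a.1 ∈ IrrDeg G 1 := by
        have := (Finset.mem_filter.mp a.2).1
        rwa [hLf, Set.Finite.mem_toFinset] at this
      have haL' : a'.1 ∈ IrrDeg G 1 := by
        have := (Finset.mem_filter.mp a'.2).1
        rwa [hLf, Set.Finite.mem_toFinset] at this
      apply Subtype.ext
      funext g
      have h1 := congrArg (fun φ : Q →* ℂ => φ ((g : G) : Q)) hpe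
      have h2 : (((lf a.1) * (lf ψ₀)⁻¹) g : ℂ) = (((lf a'.1) * (lf ψ₀)⁻¹) g : ℂ) := h1
      simp only [MonoidHom.mul_apply, MonoidHom.inv_apply, Units.val_mul] at h2
      have h3 : (lf a.1 g : ℂ) = (lf a'.1 g : ℂ) :=
        mul_right_cancel₀ (Units.ne_zero ((lf ψ₀ g)⁻¹)) h2
      rw [hlf a.1 haL g, hlf a'.1 haL' g] at h3
      exact h3
    calc T.card = Nat.card {a // a ∈ T} := by
          rw [Nat.card_eq_fintype_card, Fintype.card_coe]
      _ ≤ Nat.card (Q →* ℂ) := Nat.card_le_card_of_injective Φ hinj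
      _ ≤ K.index := hQcard
  have hcards : Lf.card ≤ K.index * Sf.card :=
    Finset.card_le_mul_card_image_of_maps_to hmaps K.index hfib
  have hL : (IrrDeg G 1).ncard = Lf.card := Set.ncard_eq_toFinset_card _ hLfin
  have hS : (IrrDeg G n).ncard = Sf.card := Set.ncard_eq_toFinset_card _ hSfin
  rw [hL, hS]
  calc (Lf.card : ℝ) ≤ ((K.index * Sf.card : ℕ) : ℝ) := Nat.cast_le.mpr hcards
    _ = (Sf.card : ℝ) * (K.index : ℝ) := by push_cast; ring
end
end

section
/- Let X be a finite non-empty set, let d ≥ 1 be a real number, and let f : X → ℝ satisfy -1 ≤ f(x) ≤ d for all x ∈ X, Σ_{x ∈ X} f(x) = 0, and Σ_{x ∈ X} f(x)² = |X|. Then the number of x ∈ X with f(x) ≠ 0 is at least |X|/d. -/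
theorem stmt_16 (X : Type) [Fintype X] [Nonempty X]
    (d : ℝ) (hd : 1 ≤ d) (f : X → ℝ)
    (hrange : ∀ x, -1 ≤ f x ∧ f x ≤ d)
    (hmean : ∑ x, f x = 0)
    (hvar : ∑ x, f x ^ 2 = (Fintype.card X : ℝ)) :
    (Fintype.card X : ℝ) / d ≤ ({x : X | f x ≠ 0}.ncard : ℝ) := by
  have hd0 : 0 < d := lt_of_lt_of_le one_pos hd
  set S : Finset X := Finset.univ.filter (fun x => f x ≠ 0) with hS
  have hncard : ({x : X | f x ≠ 0}.ncard : ℝ) = (S.card : ℝ) := by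
    congr 1
    rw [Set.ncard_eq_toFinset_card']
    congr 1
    ext x
    simp [hS]
  have hsum2 : ∑ x ∈ S, f x ^ 2 = (Fintype.card X : ℝ) := by
    rw [← hvar]
    apply Finset.sum_filter_of_ne
    intro x _ h
    intro h0
    exact h (by rw [h0]; ring)
  have hsum1 : ∑ x ∈ S, f x = 0 := by
    rw [← hmean]
    apply Finset.sum_filter_of_ne
    intro x _ h h0
    exact h h0
  have key : (Fintype.card X : ℝ) ≤ d * S.card := by
    calc (Fintype.card X : ℝ) = ∑ x ∈ S, f x ^ 2 := hsum2.symm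
      _ ≤ ∑ x ∈ S, ((d - 1) * f x + d) := by
          apply Finset.sum_le_sum
          intro x _
          have h1 := (hrange x).1
          have h2 := (hrange x).2
          nlinarith [(hrange x).1, (hrange x).2]
      _ = (d - 1) * (∑ x ∈ S, f x) + d * S.card := by
          rw [Finset.sum_add_distrib, ← Finset.mul_sum, Finset.sum_const]
          ring
      _ = d * S.card := by rw [hsum1]; ring
  rw [hncard, div_le_iff₀ hd0]
  linarith [key]
end
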